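/- The Frölicher–Nijenhuis bracket of the vertical endomorphism J and the Jacobi endomorphism Φ satisfies [J,Φ] = 3R + Φ∧dt: for all smooth vector fields X, Y on E, [JX,ΦY] + [ΦX,JY] + (J∘Φ + Φ∘J)([X,Y]) − J([X,ΦY]) − J([ΦX,Y]) − Φ([X,JY]) − Φ([JX,Y]) = 3 R(X,Y) + dt(Y)Φ(X) − dt(X)Φ(Y), where R(X,Y) := Σ_k ( ½ Σ_{i,j} R^k_{ij} (δx^i(X)δx^j(Y) − δx^i(Y)δx^j(X)) + Σ_i R^k_i (dt(X)δx^i(Y) − dt(Y)δx^i(X)) ) ∂/∂y^k. -/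

import Mathlib

noncomputable section

/-- The local model `E = ℝ × (Fin n → ℝ) × (Fin n → ℝ)` of the first jet bundle `J¹π`,
with coordinates `(t, xⁱ, yⁱ)`.  Tangent vectors at a point are identified with
elements of `E n` itself. -/
abbrev E (n : ℕ) : Type := ℝ × (Fin n → ℝ) × (Fin n → ℝ)

variable {n : ℕ}

/-- A map between normed spaces is `C^∞`-smooth. -/
def Cinf {α β : Type*} [NormedAddCommGroup α] [NormedSpace ℝ α]
    [NormedAddCommGroup β] [NormedSpace ℝ β] (f : α → β) : Prop :=
  ContDiff ℝ (⊤ : ℕ∞) f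

/-- A tangent vector having only a `y`-component. -/
def ypart (w : Fin n → ℝ) : E n := (0, 0, w)

/-- The coordinate vector `∂/∂yⁱ`. -/
def pdy (i : Fin n) : E n := ypart (Pi.single i 1)

/-- The coordinate vector `∂/∂xⁱ`. -/
def pdx (i : Fin n) : E n := (0, Pi.single i 1, 0)

/-- Action of a vector field `X` on a function `f`: `X(f)(p) = df_p(X(p))`. -/
def vfd (X : E n → E n) (f : E n → ℝ) : E n → ℝ := fun p => fderiv ℝ f p (X p)

/-- Lie bracket of vector fields on `E n`. -/
def lieb (X Y : E n → E n) : E n → E n :=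
  fun p => fderiv ℝ Y p (X p) - fderiv ℝ X p (Y p)

/-- The semispray `S = ∂/∂t + Σ yⁱ ∂/∂xⁱ − 2 Σ Gⁱ ∂/∂yⁱ` associated to `G`. -/
def Ssp (G : E n → Fin n → ℝ) : E n → E n := fun p => (1, p.2.2, fun i => -(2 * G p i))

/-- Nonlinear connection coefficients `Nⁱⱼ = ∂Gⁱ/∂yʲ`. -/
def Nc (G : E n → Fin n → ℝ) (i j : Fin n) : E n → ℝ :=
  fun p => fderiv ℝ (fun q => G q i) p (pdy j)

/-- `Nⁱ₀ = 2Gⁱ − Σⱼ Nⁱⱼ yʲ`. -/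
def N0c (G : E n → Fin n → ℝ) (i : Fin n) : E n → ℝ :=
  fun p => 2 * G p i - ∑ j, Nc G i j p * p.2.2 j

/-- The horizontal vector field `δ/δxⁱ = ∂/∂xⁱ − Σⱼ Nʲᵢ ∂/∂yʲ`. -/
def ddx (G : E n → Fin n → ℝ) (i : Fin n) : E n → E n :=
  fun p => (0, Pi.single i 1, fun j => -(Nc G j i p))

/-- The contact 1-form `δxⁱ = dxⁱ − yⁱ dt`. -/
def dxi (i : Fin n) : E n → E n → ℝ := fun p w => w.2.1 i - p.2.2 i * w.1

/-- The 1-form `δyⁱ = dyⁱ + Σⱼ Nⁱⱼ dxʲ + Nⁱ₀ dt`. -/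
def dyi (G : E n → Fin n → ℝ) (i : Fin n) : E n → E n → ℝ :=
  fun p w => w.2.2 i + (∑ j, Nc G i j p * w.2.1 j) + N0c G i p * w.1

/-- The vertical endomorphism `J = Σᵢ ∂/∂yⁱ ⊗ δxⁱ`. -/
def Jv : E n → E n → E n := fun p w => ypart (fun i => dxi i p w)

/-- The horizontal projector `h = S ⊗ dt + Σᵢ δ/δxⁱ ⊗ δxⁱ`. -/
def hv (G : E n → Fin n → ℝ) : E n → E n → E n :=
  fun p w => w.1 • Ssp G p + ∑ i, dxi i p w • ddx G i p

/-- Jacobi endomorphism components `Rⁱⱼ = 2 ∂Gⁱ/∂xʲ − Σₖ Nⁱₖ Nᵏⱼ − S(Nⁱⱼ)`. -/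
def Rjac (G : E n → Fin n → ℝ) (i j : Fin n) : E n → ℝ := fun p =>
  2 * fderiv ℝ (fun q => G q i) p (pdx j) - (∑ k, Nc G i k p * Nc G k j p)
    - vfd (Ssp G) (Nc G i j) p

/-- Curvature components `Rⁱⱼₖ = (δ/δxᵏ)(Nⁱⱼ) − (δ/δxʲ)(Nⁱₖ)`. -/
def Rcur (G : E n → Fin n → ℝ) (i j k : Fin n) : E n → ℝ := fun p =>
  fderiv ℝ (Nc G i j) p (ddx G k p) - fderiv ℝ (Nc G i k) p (ddx G j p)

/-- The Jacobi endomorphism `Φ = Σᵢⱼ Rʲᵢ ∂/∂yʲ ⊗ δxⁱ`. -/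
def Phi (G : E n → Fin n → ℝ) : E n → E n → E n :=
  fun p w => ypart (fun j => ∑ i, Rjac G j i p * dxi i p w)

/-- The tensor `Ψ = Σᵢ δ/δxⁱ ⊗ δyⁱ − Σᵢⱼ Rʲᵢ ∂/∂yʲ ⊗ δxⁱ`. -/
def Psi (G : E n → Fin n → ℝ) : E n → E n → E n :=
  fun p w => (∑ i, dyi G i p w • ddx G i p) - Phi G p w

/-- Lie derivative of a 1-form `θ` along `X`, evaluated on a vector field `Y`:
`(L_Xθ)(Y) = X(θ(Y)) − θ([X,Y])`. -/
def lieD (X : E n → E n) (θ : E n → E n → ℝ) (Y : E n → E n) : E n → ℝ :=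
  fun p => fderiv ℝ (fun q => θ q (Y q)) p (X p) - θ p (lieb X Y p)

/-- Exterior derivative of a 1-form: `dθ(X,Y) = X(θ(Y)) − Y(θ(X)) − θ([X,Y])`. -/
def extD (θ : E n → E n → ℝ) (X Y : E n → E n) : E n → ℝ :=
  fun p => fderiv ℝ (fun q => θ q (Y q)) p (X p) - fderiv ℝ (fun q => θ q (X q)) p (Y p)
    - θ p (lieb X Y p)

/-- Exterior derivative of a 1-form given as an operator on vector fields. -/
def extDop (α : (E n → E n) → E n → ℝ) (X Y : E n → E n) : E n → ℝ :=
  fun p => fderiv ℝ (α Y) p (X p) - fderiv ℝ (α X) p (Y p) - α (lieb X Y) p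

/-- The semi-basic 1-form `θ₀ dt + Σᵢ θᵢ δxⁱ`. -/
def sbform (θ0 : E n → ℝ) (θc : Fin n → E n → ℝ) : E n → E n → ℝ :=
  fun p w => θ0 p * w.1 + ∑ i, θc i p * dxi i p w

/-- `d_Jθ(X,Y) = dθ(JX,Y) + dθ(X,JY)` for a semi-basic 1-form `θ`. -/
def dJf (θ : E n → E n → ℝ) (X Y : E n → E n) : E n → ℝ :=
  fun p => extD θ (fun q => Jv q (X q)) Y p + extD θ X (fun q => Jv q (Y q)) p

/-- `d_hθ(X,Y) = dθ(hX,Y) + dθ(X,hY) − dθ(X,Y)` for a semi-basic 1-form `θ`. -/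
def dhf (G : E n → Fin n → ℝ) (θ : E n → E n → ℝ) (X Y : E n → E n) : E n → ℝ :=
  fun p => extD θ (fun q => hv G q (X q)) Y p + extD θ X (fun q => hv G q (Y q)) p
    - extD θ X Y p

/-- `d_Φθ(X,Y) = dθ(ΦX,Y) + dθ(X,ΦY)` for a semi-basic 1-form `θ`. -/
def dPhif (G : E n → Fin n → ℝ) (θ : E n → E n → ℝ) (X Y : E n → E n) : E n → ℝ :=
  fun p => extD θ (fun q => Phi G q (X q)) Y p + extD θ X (fun q => Phi G q (Y q)) p

/-- Lie derivative of the 2-form `dθ` along a vector field `SS`: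
`(L_S dθ)(X,Y) = S(dθ(X,Y)) − dθ([S,X],Y) − dθ(X,[S,Y])`. -/
def lieD2 (SS : E n → E n) (θ : E n → E n → ℝ) (X Y : E n → E n) : E n → ℝ :=
  fun p => fderiv ℝ (extD θ X Y) p (SS p) - extD θ (lieb SS X) Y p - extD θ X (lieb SS Y) p

/-- `∇dθ = L_S(dθ) − i_Ψ(dθ)`. -/
def nabD (G : E n → Fin n → ℝ) (θ : E n → E n → ℝ) (X Y : E n → E n) : E n → ℝ :=
  fun p => lieD2 (Ssp G) θ X Y p
    - (extD θ (fun q => Psi G q (X q)) Y p + extD θ X (fun q => Psi G q (Y q)) p)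

/-- The dynamical covariant derivative of an `n`-tuple of functions:
`(∇f)ᵢ = S(fᵢ) − Σⱼ Nʲᵢ fⱼ`. -/
def covd (G : E n → Fin n → ℝ) (f : Fin n → E n → ℝ) : Fin n → E n → ℝ :=
  fun i p => vfd (Ssp G) (f i) p - ∑ j, Nc G j i p * f j p

/-- The curvature 2-form `R(X,Y)` with components `Rᵏᵢⱼ`, `Rᵏᵢ` (see Statement 4). -/
def Rform (G : E n → Fin n → ℝ) : E n → E n → E n → E n := fun p u w =>
  ypart fun k =>
    (1 / 2 : ℝ) * ∑ i, ∑ j, Rcur G k i j p * (dxi i p u * dxi j p w - dxi i p w * dxi j p u)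
    + ∑ i, Rjac G k i p * (u.1 * dxi i p w - w.1 * dxi i p u)


-- coordinate clms
def ct : E n →L[ℝ] ℝ := ContinuousLinearMap.fst ℝ ℝ _
def cx (i : Fin n) : E n →L[ℝ] ℝ :=
  (ContinuousLinearMap.proj i).comp ((ContinuousLinearMap.fst ℝ (Fin n → ℝ) (Fin n → ℝ)).comp
    (ContinuousLinearMap.snd ℝ ℝ _))
def cy (i : Fin n) : E n →L[ℝ] ℝ :=
  (ContinuousLinearMap.proj i).comp ((ContinuousLinearMap.snd ℝ (Fin n → ℝ) (Fin n → ℝ)).comp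
    (ContinuousLinearMap.snd ℝ ℝ _))

example (q : E n) (i : Fin n) : cx i q = q.2.1 i := rfl
example (q : E n) (i : Fin n) : cy i q = q.2.2 i := rfl
example (q : E n) : ct q = q.1 := rfl

lemma Dct (p v : E n) : fderiv ℝ (fun q : E n => q.1) p v = v.1 := by
  rw [show (fun q : E n => q.1) = (ct : E n → ℝ) from rfl, ContinuousLinearMap.fderiv]; rfl
lemma Dcx (i : Fin n) (p v : E n) : fderiv ℝ (fun q : E n => q.2.1 i) p v = v.2.1 i := by
  rw [show (fun q : E n => q.2.1 i) = (cx i : E n → ℝ) from rfl, ContinuousLinearMap.fderiv]; rfl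
lemma Dcy (i : Fin n) (p v : E n) : fderiv ℝ (fun q : E n => q.2.2 i) p v = v.2.2 i := by
  rw [show (fun q : E n => q.2.2 i) = (cy i : E n → ℝ) from rfl, ContinuousLinearMap.fderiv]; rfl

lemma Cinf.dAt {f : E n → E n} (h : Cinf f) {p : E n} : DifferentiableAt ℝ f p :=
  (h.differentiable (by simp)).differentiableAt
lemma Cinf.dAt' {f : E n → ℝ} (h : Cinf f) {p : E n} : DifferentiableAt ℝ f p :=
  (h.differentiable (by simp)).differentiableAt

lemma Cinf.pd {f : E n → ℝ} (h : Cinf f) (v : E n) : Cinf (fun p => fderiv ℝ f p v) := by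
  exact (h.fderiv_right (m := (⊤:ℕ∞)) (by exact_mod_cast le_rfl)).clm_apply contDiff_const

lemma schwarz {f : E n → ℝ} (h : Cinf f) (p v w : E n) :
    fderiv ℝ (fun q => fderiv ℝ f q w) p v = fderiv ℝ (fun q => fderiv ℝ f q v) p w := by
  have hd : DifferentiableAt ℝ (fderiv ℝ f) p :=
    ((h.fderiv_right (m := (⊤:ℕ∞)) (by exact_mod_cast le_rfl)).differentiable (by simp)).differentiableAt
  have h1 : ∀ u v' : E n, fderiv ℝ (fun q => fderiv ℝ f q u) p v' = fderiv ℝ (fderiv ℝ f) p v' u := by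
    intro u v'
    rw [show (fun q => fderiv ℝ f q u) = fun q => (fderiv ℝ f q) ((fun _ : E n => u) q) from rfl,
      fderiv_clm_apply hd (differentiableAt_const u)]
    simp
  rw [h1 w v, h1 v w]
  have hsym := (h.contDiffAt (x := p)).isSymmSndFDerivAt (n := ((⊤:ℕ∞) : WithTop ℕ∞)) (by rw [minSmoothness_of_isRCLikeNormedField]; exact WithTop.coe_le_coe.2 (le_top : (2:ℕ∞) ≤ ⊤))
  exact hsym v w

def et : E n := (1, 0, 0)

lemma decomp (v : E n) :
    v = v.1 • (et : E n) + (∑ m, v.2.1 m • pdx m) + ∑ m, v.2.2 m • pdy m := by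
  refine Prod.ext ?_ (Prod.ext ?_ ?_)
  · simp [et, pdx, pdy, ypart, Prod.fst_sum]
  · funext j
    simp [et, pdx, pdy, ypart, Prod.snd_sum, Prod.fst_sum, Finset.sum_apply,
      Pi.single_apply, mul_ite, Finset.sum_ite_eq]
  · funext j
    simp [et, pdx, pdy, ypart, Prod.snd_sum, Finset.sum_apply,
      Pi.single_apply, mul_ite, Finset.sum_ite_eq]

lemma fderiv_decomp (f : E n → ℝ) (p v : E n) :
    fderiv ℝ f p v = v.1 * fderiv ℝ f p et + (∑ m, v.2.1 m * fderiv ℝ f p (pdx m))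
      + ∑ m, v.2.2 m * fderiv ℝ f p (pdy m) := by
  conv_lhs => rw [decomp v]
  rw [map_add, map_add, map_smul, map_sum, map_sum]
  simp [smul_eq_mul]

lemma fderiv_ypart (f : E n → ℝ) (p : E n) (a : Fin n → ℝ) :
    fderiv ℝ f p (ypart a) = ∑ m, a m * fderiv ℝ f p (pdy m) := by
  rw [fderiv_decomp]; simp [ypart]

lemma Dmul {f g : E n → ℝ} {p : E n} (hf : DifferentiableAt ℝ f p)
    (hg : DifferentiableAt ℝ g p) (v : E n) :
    fderiv ℝ (fun q => f q * g q) p v = f p * fderiv ℝ g p v + g p * fderiv ℝ f p v := by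
  rw [fderiv_fun_mul hf hg]; simp [smul_eq_mul]

lemma Dsub {f g : E n → ℝ} {p : E n} (hf : DifferentiableAt ℝ f p)
    (hg : DifferentiableAt ℝ g p) (v : E n) :
    fderiv ℝ (fun q => f q - g q) p v = fderiv ℝ f p v - fderiv ℝ g p v := by
  rw [fderiv_fun_sub hf hg]; rfl

lemma Dadd {f g : E n → ℝ} {p : E n} (hf : DifferentiableAt ℝ f p)
    (hg : DifferentiableAt ℝ g p) (v : E n) :
    fderiv ℝ (fun q => f q + g q) p v = fderiv ℝ f p v + fderiv ℝ g p v := by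
  rw [fderiv_fun_add hf hg]; rfl

lemma Dsum {ι : Type*} {s : Finset ι} {f : ι → E n → ℝ} {p : E n}
    (hf : ∀ i ∈ s, DifferentiableAt ℝ (f i) p) (v : E n) :
    fderiv ℝ (fun q => ∑ i ∈ s, f i q) p v = ∑ i ∈ s, fderiv ℝ (f i) p v := by
  rw [fderiv_fun_sum hf]; simp

lemma DconstMul {f : E n → ℝ} {p : E n} (hf : DifferentiableAt ℝ f p) (c : ℝ) (v : E n) :
    fderiv ℝ (fun q => c * f q) p v = c * fderiv ℝ f p v := by
  rw [fderiv_const_mul hf]; simp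

lemma Dcomp (c : E n →L[ℝ] ℝ) {B : E n → E n} {p : E n} (hB : DifferentiableAt ℝ B p) (v : E n) :
    fderiv ℝ (fun q => c (B q)) p v = c (fderiv ℝ B p v) := by
  exact congrFun (congrArg (fun (L : E n →L[ℝ] ℝ) => (L : E n → ℝ))
    ((c.hasFDerivAt.comp p hB.hasFDerivAt).fderiv)) v

lemma D1 {B : E n → E n} {p : E n} (hB : DifferentiableAt ℝ B p) (v : E n) :
    fderiv ℝ (fun q => (B q).1) p v = (fderiv ℝ B p v).1 := Dcomp ct hB v

lemma Dx1 (i : Fin n) {B : E n → E n} {p : E n} (hB : DifferentiableAt ℝ B p) (v : E n) :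
    fderiv ℝ (fun q => (B q).2.1 i) p v = (fderiv ℝ B p v).2.1 i := Dcomp (cx i) hB v

lemma Dy1 (i : Fin n) {B : E n → E n} {p : E n} (hB : DifferentiableAt ℝ B p) (v : E n) :
    fderiv ℝ (fun q => (B q).2.2 i) p v = (fderiv ℝ B p v).2.2 i := Dcomp (cy i) hB v

lemma cinf_coord1 {X : E n → E n} (hX : Cinf X) : Cinf (fun q => (X q).1) :=
  (ct (n := n)).contDiff.comp hX
lemma cinf_coordx {X : E n → E n} (hX : Cinf X) (i : Fin n) : Cinf (fun q => (X q).2.1 i) :=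
  (cx (n := n) i).contDiff.comp hX
lemma cinf_coordy {X : E n → E n} (hX : Cinf X) (i : Fin n) : Cinf (fun q => (X q).2.2 i) :=
  (cy (n := n) i).contDiff.comp hX

lemma cinf_G_i {G : E n → Fin n → ℝ} (hG : Cinf G) (i : Fin n) : Cinf (fun q => G q i) :=
  contDiff_pi.1 hG i

lemma cinf_Nc {G : E n → Fin n → ℝ} (hG : Cinf G) (i j : Fin n) : Cinf (Nc G i j) :=
  (cinf_G_i hG i).pd (pdy j)

lemma cinf_Ssp {G : E n → Fin n → ℝ} (hG : Cinf G) : Cinf (Ssp G) := by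
  refine ContDiff.prodMk contDiff_const (ContDiff.prodMk ?_ ?_)
  · exact ((ContinuousLinearMap.snd ℝ (Fin n → ℝ) (Fin n → ℝ)).comp
      (ContinuousLinearMap.snd ℝ ℝ _)).contDiff
  · exact contDiff_pi.2 fun i => (contDiff_const.mul (cinf_G_i hG i)).neg

lemma cinf_vfdS {G : E n → Fin n → ℝ} (hG : Cinf G) {f : E n → ℝ} (hf : Cinf f) :
    Cinf (vfd (Ssp G) f) :=
  (hf.fderiv_right (m := (⊤:ℕ∞)) (by exact_mod_cast le_rfl)).clm_apply (cinf_Ssp hG)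

lemma cinf_Rjac {G : E n → Fin n → ℝ} (hG : Cinf G) (i j : Fin n) : Cinf (Rjac G i j) := by
  refine ContDiff.sub (ContDiff.sub ?_ ?_) ?_
  · exact contDiff_const.mul ((cinf_G_i hG i).pd (pdx j))
  · exact ContDiff.sum fun k _ => (cinf_Nc hG i k).mul (cinf_Nc hG k j)
  · exact cinf_vfdS hG (cinf_Nc hG i j)

lemma cinf_JX {X : E n → E n} (hX : Cinf X) : Cinf (fun q => Jv q (X q)) := by
  refine ContDiff.prodMk contDiff_const (ContDiff.prodMk contDiff_const (contDiff_pi.2 fun i => ?_))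
  exact (cinf_coordx hX i).sub ((cy (n := n) i).contDiff.mul (cinf_coord1 hX))

lemma cinf_PhiY {G : E n → Fin n → ℝ} (hG : Cinf G) {Y : E n → E n} (hY : Cinf Y) :
    Cinf (fun q => Phi G q (Y q)) := by
  refine ContDiff.prodMk contDiff_const (ContDiff.prodMk contDiff_const (contDiff_pi.2 fun k => ?_))
  refine ContDiff.sum fun i _ => (cinf_Rjac hG k i).mul ?_
  exact (cinf_coordx hY i).sub ((cy (n := n) i).contDiff.mul (cinf_coord1 hY))

lemma ContDiff.dAt' {α β : Type*} [NormedAddCommGroup α] [NormedSpace ℝ α]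
    [NormedAddCommGroup β] [NormedSpace ℝ β] {f : α → β}
    (h : ContDiff ℝ ((⊤:ℕ∞) : WithTop ℕ∞) f) {p : α} : DifferentiableAt ℝ f p :=
  (h.differentiable (by simp)).differentiableAt

lemma lieb_y {A B : E n → E n} {p : E n} (hA : DifferentiableAt ℝ A p)
    (hB : DifferentiableAt ℝ B p) (k : Fin n) :
    (lieb A B p).2.2 k = fderiv ℝ (fun q => (B q).2.2 k) p (A p)
      - fderiv ℝ (fun q => (A q).2.2 k) p (B p) := by
  simp [lieb, Dy1 k hA, Dy1 k hB]

lemma lieb_1 {A B : E n → E n} {p : E n} (hA : DifferentiableAt ℝ A p)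
    (hB : DifferentiableAt ℝ B p) :
    (lieb A B p).1 = fderiv ℝ (fun q => (B q).1) p (A p)
      - fderiv ℝ (fun q => (A q).1) p (B p) := by
  simp [lieb, D1 hA, D1 hB]

lemma lieb_x {A B : E n → E n} {p : E n} (hA : DifferentiableAt ℝ A p)
    (hB : DifferentiableAt ℝ B p) (j : Fin n) :
    (lieb A B p).2.1 j = fderiv ℝ (fun q => (B q).2.1 j) p (A p)
      - fderiv ℝ (fun q => (A q).2.1 j) p (B p) := by
  simp [lieb, Dx1 j hA, Dx1 j hB]

lemma vfd_expand {G : E n → Fin n → ℝ} (f : E n → ℝ) (p : E n) :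
    vfd (Ssp G) f p = fderiv ℝ f p et + (∑ m, p.2.2 m * fderiv ℝ f p (pdx m))
      + ∑ m, -(2 * G p m) * fderiv ℝ f p (pdy m) := by
  show fderiv ℝ f p (Ssp G p) = _
  rw [fderiv_decomp]
  simp [Ssp]

lemma fderiv_ddx {G : E n → Fin n → ℝ} (f : E n → ℝ) (p : E n) (j : Fin n) :
    fderiv ℝ f p (ddx G j p) = fderiv ℝ f p (pdx j)
      - ∑ m, Nc G m j p * fderiv ℝ f p (pdy m) := by
  rw [fderiv_decomp]
  simp [ddx, Pi.single_apply, ite_mul, Finset.sum_ite_eq, neg_mul, sub_eq_add_neg,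
    Finset.sum_neg_distrib]

-- `∂/∂yⁱ (Nᵏⱼ) = ∂/∂yʲ (Nᵏᵢ)` as functions
lemma Nc_symm {G : E n → Fin n → ℝ} (hG : Cinf G) (k i j : Fin n) :
    (fun q => fderiv ℝ (Nc G k j) q (pdy i)) = (fun q => fderiv ℝ (Nc G k i) q (pdy j)) := by
  funext q
  show fderiv ℝ (fun q' => fderiv ℝ (fun q2 => G q2 k) q' (pdy j)) q (pdy i)
    = fderiv ℝ (fun q' => fderiv ℝ (fun q2 => G q2 k) q' (pdy i)) q (pdy j)
  exact schwarz (cinf_G_i hG k) q (pdy i) (pdy j)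

lemma Dvfd {G : E n → Fin n → ℝ} (hG : Cinf G) {f : E n → ℝ} (hf : Cinf f) (p : E n) (i : Fin n) :
    fderiv ℝ (vfd (Ssp G) f) p (pdy i)
      = vfd (Ssp G) (fun q => fderiv ℝ f q (pdy i)) p + fderiv ℝ f p (pdx i)
        - 2 * ∑ m, Nc G m i p * fderiv ℝ f p (pdy m) := by
  have hfe : Cinf (fun q => fderiv ℝ f q et) := hf.pd et
  have hfx : ∀ m : Fin n, Cinf (fun q => fderiv ℝ f q (pdx m)) := fun m => hf.pd (pdx m)
  have hfy : ∀ m : Fin n, Cinf (fun q => fderiv ℝ f q (pdy m)) := fun m => hf.pd (pdy m)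
  have dA : ∀ m : Fin n, DifferentiableAt ℝ (fun q : E n => q.2.2 m * fderiv ℝ f q (pdx m)) p :=
    fun m => (cy (n := n) m).differentiableAt.mul (hfx m).dAt'
  have dB : ∀ m : Fin n, DifferentiableAt ℝ (fun q : E n => -(2 * G q m) * fderiv ℝ f q (pdy m)) p :=
    fun m => (((contDiff_const.mul (cinf_G_i hG m)).neg).dAt').mul (hfy m).dAt'
  have dSA : DifferentiableAt ℝ (fun q : E n => ∑ m, q.2.2 m * fderiv ℝ f q (pdx m)) p :=
    DifferentiableAt.fun_sum (fun m _ => dA m)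
  have dSB : DifferentiableAt ℝ (fun q : E n => ∑ m, -(2 * G q m) * fderiv ℝ f q (pdy m)) p :=
    DifferentiableAt.fun_sum (fun m _ => dB m)
  have he : vfd (Ssp G) f = fun q => fderiv ℝ f q et + ((∑ m, q.2.2 m * fderiv ℝ f q (pdx m))
      + ∑ m, -(2 * G q m) * fderiv ℝ f q (pdy m)) := by
    funext q; rw [vfd_expand (G := G) f q]; ring
  rw [he, Dadd hfe.dAt' (dSA.fun_add dSB) (pdy i), Dadd dSA dSB (pdy i),
    Dsum (fun m _ => dA m) (pdy i), Dsum (fun m _ => dB m) (pdy i)]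
  have h2 : ∀ m, fderiv ℝ (fun q : E n => q.2.2 m * fderiv ℝ f q (pdx m)) p (pdy i)
      = p.2.2 m * fderiv ℝ (fun q => fderiv ℝ f q (pdx m)) p (pdy i)
        + fderiv ℝ f p (pdx m) * (Pi.single i (1:ℝ) : Fin n → ℝ) m := by
    intro m
    rw [Dmul (show DifferentiableAt ℝ (fun q : E n => q.2.2 m) p from (cy (n := n) m).differentiableAt) (hfx m).dAt' (pdy i), Dcy m p (pdy i)]
    rfl
  have h3 : ∀ m, fderiv ℝ (fun q => -(2 * G q m) * fderiv ℝ f q (pdy m)) p (pdy i)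
      = -(2 * G p m) * fderiv ℝ (fun q => fderiv ℝ f q (pdy m)) p (pdy i)
        - 2 * (Nc G m i p * fderiv ℝ f p (pdy m)) := by
    intro m
    rw [Dmul (((contDiff_const.mul (cinf_G_i hG m)).neg).dAt') (hfy m).dAt' (pdy i)]
    have hng : fderiv ℝ (fun q => -(2 * G q m)) p (pdy i) = -(2 * Nc G m i p) := by
      have hd : DifferentiableAt ℝ (fun q : E n => (2:ℝ) * G q m) p :=
        (contDiff_const.mul (cinf_G_i hG m)).dAt'
      rw [show (fun q : E n => -(2 * G q m)) = fun q : E n => -((fun q : E n => 2 * G q m) q) from rfl,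
        fderiv_fun_neg]
      simp only [ContinuousLinearMap.neg_apply]
      rw [DconstMul (cinf_G_i hG m).dAt' 2 (pdy i)]
      rfl
    rw [hng]; ring
  rw [Finset.sum_congr rfl (fun m _ => h2 m), Finset.sum_congr rfl (fun m _ => h3 m)]
  rw [vfd_expand (G := G) (fun q => fderiv ℝ f q (pdy i)) p]
  have hsch : ∀ v : E n, fderiv ℝ (fun q => fderiv ℝ f q v) p (pdy i)
      = fderiv ℝ (fun q => fderiv ℝ f q (pdy i)) p v := fun v => schwarz hf p (pdy i) v
  have hcoll : (∑ m, fderiv ℝ f p (pdx m) * (Pi.single i (1:ℝ) : Fin n → ℝ) m) = fderiv ℝ f p (pdx i) := by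
    simp [Pi.single_apply, mul_ite, Finset.sum_ite_eq]
  rw [Finset.sum_add_distrib, Finset.sum_sub_distrib, hcoll, hsch et]
  rw [show (∑ m, p.2.2 m * fderiv ℝ (fun q => fderiv ℝ f q (pdx m)) p (pdy i))
      = ∑ m, p.2.2 m * fderiv ℝ (fun q => fderiv ℝ f q (pdy i)) p (pdx m) from
    Finset.sum_congr rfl (fun m _ => by rw [hsch (pdx m)])]
  rw [show (∑ m, -(2 * G p m) * fderiv ℝ (fun q => fderiv ℝ f q (pdy m)) p (pdy i))
      = ∑ m, -(2 * G p m) * fderiv ℝ (fun q => fderiv ℝ f q (pdy i)) p (pdy m) from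
    Finset.sum_congr rfl (fun m _ => by rw [hsch (pdy m)])]
  rw [Finset.mul_sum]
  ring

lemma DRjac {G : E n → Fin n → ℝ} (hG : Cinf G) (p : E n) (k j i : Fin n) :
    fderiv ℝ (Rjac G k j) p (pdy i)
      = 2 * fderiv ℝ (Nc G k i) p (pdx j)
        - (∑ m, (Nc G k m p * fderiv ℝ (Nc G m j) p (pdy i)
            + Nc G m j p * fderiv ℝ (Nc G k m) p (pdy i)))
        - vfd (Ssp G) (fun q => fderiv ℝ (Nc G k j) q (pdy i)) p
        - fderiv ℝ (Nc G k j) p (pdx i)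
        + 2 * ∑ m, Nc G m i p * fderiv ℝ (Nc G k j) p (pdy m) := by
  have dG2 : DifferentiableAt ℝ (fun q : E n => 2 * fderiv ℝ (fun q2 => G q2 k) q (pdx j)) p :=
    (contDiff_const.mul ((cinf_G_i hG k).pd (pdx j))).dAt'
  have dSum : DifferentiableAt ℝ (fun q : E n => ∑ m, Nc G k m q * Nc G m j q) p :=
    DifferentiableAt.fun_sum (fun m _ => (cinf_Nc hG k m).dAt'.mul (cinf_Nc hG m j).dAt')
  have dvf : DifferentiableAt ℝ (vfd (Ssp G) (Nc G k j)) p :=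
    (cinf_vfdS hG (cinf_Nc hG k j)).dAt'
  have hrj : Rjac G k j = fun q => ((2 * fderiv ℝ (fun q2 => G q2 k) q (pdx j)
      - ∑ m, Nc G k m q * Nc G m j q) - vfd (Ssp G) (Nc G k j) q) := rfl
  rw [hrj, Dsub (dG2.fun_sub dSum) dvf (pdy i), Dsub dG2 dSum (pdy i),
    DconstMul ((cinf_G_i hG k).pd (pdx j)).dAt' 2 (pdy i),
    Dsum (fun m _ => (cinf_Nc hG k m).dAt'.fun_mul (cinf_Nc hG m j).dAt') (pdy i)]
  rw [Finset.sum_congr rfl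
    (fun m _ => Dmul (cinf_Nc hG k m).dAt' (cinf_Nc hG m j).dAt' (pdy i))]
  rw [Dvfd hG (cinf_Nc hG k j) p i]
  rw [show fderiv ℝ (fun q => fderiv ℝ (fun q2 => G q2 k) q (pdx j)) p (pdy i)
      = fderiv ℝ (Nc G k i) p (pdx j) from schwarz (cinf_G_i hG k) p (pdy i) (pdx j)]
  ring

lemma key {G : E n → Fin n → ℝ} (hG : Cinf G) (p : E n) (k i j : Fin n) :
    fderiv ℝ (Rjac G k j) p (pdy i) - fderiv ℝ (Rjac G k i) p (pdy j)
      = 3 * Rcur G k i j p := by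
  rw [DRjac hG p k j i, DRjac hG p k i j]
  rw [Nc_symm hG k i j]
  rw [show (∑ m, (Nc G k m p * fderiv ℝ (Nc G m j) p (pdy i)
        + Nc G m j p * fderiv ℝ (Nc G k m) p (pdy i)))
      = ∑ m, (Nc G k m p * fderiv ℝ (Nc G m i) p (pdy j)
        + Nc G m j p * fderiv ℝ (Nc G k i) p (pdy m)) from
    Finset.sum_congr rfl (fun m _ => by
      rw [congrFun (Nc_symm hG m i j) p, congrFun (Nc_symm hG k i m) p])]
  rw [show (∑ m, (Nc G k m p * fderiv ℝ (Nc G m i) p (pdy j)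
        + Nc G m i p * fderiv ℝ (Nc G k m) p (pdy j)))
      = ∑ m, (Nc G k m p * fderiv ℝ (Nc G m i) p (pdy j)
        + Nc G m i p * fderiv ℝ (Nc G k j) p (pdy m)) from
    Finset.sum_congr rfl (fun m _ => by rw [congrFun (Nc_symm hG k j m) p])]
  rw [show Rcur G k i j p = fderiv ℝ (Nc G k i) p (ddx G j p)
      - fderiv ℝ (Nc G k j) p (ddx G i p) from rfl]
  rw [fderiv_ddx (Nc G k i) p j, fderiv_ddx (Nc G k j) p i]
  rw [Finset.sum_add_distrib, Finset.sum_add_distrib]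
  ring

lemma sum_swap_neg (f : Fin n → Fin n → ℝ) (a b : Fin n → ℝ) :
    ∑ i, ∑ j, f j i * (a i * b j - b i * a j)
      = - ∑ i, ∑ j, f i j * (a i * b j - b i * a j) := by
  rw [Finset.sum_comm]
  rw [show (- ∑ i, ∑ j, f i j * (a i * b j - b i * a j))
      = ∑ i, ∑ j, -(f i j * (a i * b j - b i * a j)) by simp]
  exact Finset.sum_congr rfl fun i _ => Finset.sum_congr rfl fun j _ => by ring

lemma antisym_sum (f : Fin n → Fin n → ℝ) (a b : Fin n → ℝ) :
    ∑ i, ∑ j, f i j * (a i * b j - b i * a j)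
      = (1/2) * ∑ i, ∑ j, ((f i j - f j i) * (a i * b j - b i * a j)) := by
  have h := sum_swap_neg f a b
  have expand : ∑ i, ∑ j, ((f i j - f j i) * (a i * b j - b i * a j))
      = (∑ i, ∑ j, f i j * (a i * b j - b i * a j))
        - ∑ i, ∑ j, f j i * (a i * b j - b i * a j) := by
    rw [← Finset.sum_sub_distrib]
    refine Finset.sum_congr rfl fun i _ => ?_
    rw [← Finset.sum_sub_distrib]
    exact Finset.sum_congr rfl fun j _ => by ring
  rw [expand, h]; ring

lemma final {R a b su sw : Fin n → ℝ} {dR C : Fin n → Fin n → ℝ} {u1 w1 c d : ℝ}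
    (hkey : ∀ i j, dR i j - dR j i = 3 * C i j) :
    (∑ i, (R i * (a i - su i * w1) + sw i * ∑ m, su m * dR m i)
        - (c - (∑ i, R i * sw i) * u1))
      + ((d - (∑ i, R i * su i) * w1)
        - ∑ i, (R i * (b i - sw i * u1) + su i * ∑ m, sw m * dR m i))
      + 0 + 0 - (-c) - d - (- ∑ i, R i * b i) - (∑ i, R i * a i)
      = 3 * ((1/2) * (∑ i, ∑ j, C i j * (su i * sw j - sw i * su j))
          + ∑ i, R i * (u1 * sw i - w1 * su i))
        + w1 * (∑ i, R i * su i) - u1 * (∑ i, R i * sw i) := by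
  have hR : (∑ i, R i * (u1 * sw i - w1 * su i))
      = u1 * (∑ i, R i * sw i) - w1 * (∑ i, R i * su i) := by
    simp only [mul_sub, Finset.sum_sub_distrib]
    rw [Finset.mul_sum, Finset.mul_sum]
    congr 1 <;> exact Finset.sum_congr rfl fun i _ => by ring
  have split1 : (∑ i, (R i * (a i - su i * w1) + sw i * ∑ m, su m * dR m i))
      = ((∑ i, R i * a i) - (∑ i, R i * su i) * w1) + ∑ i, sw i * ∑ m, su m * dR m i := by
    rw [Finset.sum_add_distrib]
    congr 1
    simp only [mul_sub, Finset.sum_sub_distrib]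
    congr 1
    rw [Finset.sum_mul]; exact Finset.sum_congr rfl fun i _ => by ring
  have split2 : (∑ i, (R i * (b i - sw i * u1) + su i * ∑ m, sw m * dR m i))
      = ((∑ i, R i * b i) - (∑ i, R i * sw i) * u1) + ∑ i, su i * ∑ m, sw m * dR m i := by
    rw [Finset.sum_add_distrib]
    congr 1
    simp only [mul_sub, Finset.sum_sub_distrib]
    congr 1
    rw [Finset.sum_mul]; exact Finset.sum_congr rfl fun i _ => by ring
  have hdd : (∑ i, sw i * ∑ m, su m * dR m i) - (∑ i, su i * ∑ m, sw m * dR m i)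
      = 3 * ((1/2) * (∑ i, ∑ j, C i j * (su i * sw j - sw i * su j))) := by
    have l1 : (∑ i, sw i * ∑ m, su m * dR m i) = ∑ i, ∑ j, dR i j * (su i * sw j) := by
      simp only [Finset.mul_sum]
      rw [Finset.sum_comm]
      exact Finset.sum_congr rfl fun i _ => Finset.sum_congr rfl fun j _ => by ring
    have l2 : (∑ i, su i * ∑ m, sw m * dR m i) = ∑ i, ∑ j, dR i j * (sw i * su j) := by
      simp only [Finset.mul_sum]
      rw [Finset.sum_comm]
      exact Finset.sum_congr rfl fun i _ => Finset.sum_congr rfl fun j _ => by ring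
    rw [l1, l2, ← Finset.sum_sub_distrib]
    have l3 : ∑ i, ((∑ j, dR i j * (su i * sw j)) - ∑ j, dR i j * (sw i * su j))
        = ∑ i, ∑ j, dR i j * (su i * sw j - sw i * su j) := by
      refine Finset.sum_congr rfl fun i _ => ?_
      rw [← Finset.sum_sub_distrib]
      exact Finset.sum_congr rfl fun j _ => by ring
    rw [l3, antisym_sum dR su sw]
    have l4 : (∑ i, ∑ j, ((dR i j - dR j i) * (su i * sw j - sw i * su j)))
        = ∑ i, ∑ j, 3 * (C i j * (su i * sw j - sw i * su j)) := by
      exact Finset.sum_congr rfl fun i _ => Finset.sum_congr rfl fun j _ => by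
        rw [hkey i j]; ring
    rw [l4]
    rw [show (∑ i, ∑ j, 3 * (C i j * (su i * sw j - sw i * su j)))
        = 3 * ∑ i, ∑ j, C i j * (su i * sw j - sw i * su j) from by
      rw [Finset.mul_sum]; exact Finset.sum_congr rfl fun i _ => by rw [Finset.mul_sum]]
    ring
  rw [split1, split2, hR]
  linear_combination hdd

lemma DJX {X : E n → E n} (hX : Cinf X) (p v : E n) (k : Fin n) :
    fderiv ℝ (fun q => (Jv q (X q)).2.2 k) p v
      = (fderiv ℝ X p v).2.1 k - v.2.2 k * (X p).1 - p.2.2 k * (fderiv ℝ X p v).1 := by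
  have h : (fun q => (Jv q (X q)).2.2 k) = fun q : E n => (X q).2.1 k - q.2.2 k * (X q).1 := rfl
  have dmul : DifferentiableAt ℝ (fun q : E n => q.2.2 k * (X q).1) p :=
    (show DifferentiableAt ℝ (fun q : E n => q.2.2 k) p from
      (cy (n := n) k).differentiableAt).mul (cinf_coord1 hX).dAt'
  rw [h, Dsub (cinf_coordx hX k).dAt' dmul v,
    Dmul (show DifferentiableAt ℝ (fun q : E n => q.2.2 k) p from
      (cy (n := n) k).differentiableAt) (cinf_coord1 hX).dAt' v,
    Dcy k p v, Dx1 k hX.dAt v, D1 hX.dAt v]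
  ring

lemma DPhiY {G : E n → Fin n → ℝ} (hG : Cinf G) {Y : E n → E n} (hY : Cinf Y)
    (p v : E n) (k : Fin n) :
    fderiv ℝ (fun q => (Phi G q (Y q)).2.2 k) p v
      = ∑ i, (Rjac G k i p * ((fderiv ℝ Y p v).2.1 i - v.2.2 i * (Y p).1
            - p.2.2 i * (fderiv ℝ Y p v).1)
          + ((Y p).2.1 i - p.2.2 i * (Y p).1) * fderiv ℝ (Rjac G k i) p v) := by
  have h : (fun q => (Phi G q (Y q)).2.2 k)
      = fun q : E n => ∑ i, Rjac G k i q * ((Y q).2.1 i - q.2.2 i * (Y q).1) := rfl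
  have ddxi : ∀ i : Fin n, DifferentiableAt ℝ (fun q : E n => (Y q).2.1 i - q.2.2 i * (Y q).1) p :=
    fun i => (cinf_coordx hY i).dAt'.sub
      ((show DifferentiableAt ℝ (fun q : E n => q.2.2 i) p from
        (cy (n := n) i).differentiableAt).mul (cinf_coord1 hY).dAt')
  rw [h, Dsum (fun i _ => (cinf_Rjac hG k i).dAt'.fun_mul (ddxi i)) v]
  refine Finset.sum_congr rfl fun i _ => ?_
  rw [Dmul (cinf_Rjac hG k i).dAt' (ddxi i) v,
    Dsub (cinf_coordx hY i).dAt'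
      ((show DifferentiableAt ℝ (fun q : E n => q.2.2 i) p from
        (cy (n := n) i).differentiableAt).fun_mul (cinf_coord1 hY).dAt') v,
    Dmul (show DifferentiableAt ℝ (fun q : E n => q.2.2 i) p from
      (cy (n := n) i).differentiableAt) (cinf_coord1 hY).dAt' v,
    Dcy i p v, Dx1 i hY.dAt v, D1 hY.dAt v]
  ring

lemma final2 (R su sw p2 A1 B1 : Fin n → ℝ) (dR C : Fin n → Fin n → ℝ)
    (u1 w1 pk A0 B0 C1 C0 D1 D0 : ℝ)
    (hkey : ∀ i j, dR i j - dR j i = 3 * C i j) :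
    (∑ i, (R i * (A1 i - su i * w1 - p2 i * A0) + sw i * ∑ m, su m * dR m i)
        - (C1 - (∑ i, R i * sw i) * u1 - pk * C0))
      + ((D1 - (∑ i, R i * su i) * w1 - pk * D0)
        - ∑ i, (R i * (B1 i - sw i * u1 - p2 i * B0) + su i * ∑ m, sw m * dR m i))
      + 0 + 0
      - (-(C1 - pk * C0))
      - (D1 - pk * D0)
      - (∑ i, R i * (-B1 i - p2 i * -B0))
      - (∑ i, R i * (A1 i - p2 i * A0))
      = 3 * ((1/2) * (∑ i, ∑ j, C i j * (su i * sw j - sw i * su j))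
          + ∑ i, R i * (u1 * sw i - w1 * su i))
        + w1 * (∑ i, R i * su i) - u1 * (∑ i, R i * sw i) := by
  have hT7 : (∑ i, R i * (-B1 i - p2 i * -B0)) = - ∑ i, R i * (B1 i - p2 i * B0) := by
    rw [← Finset.sum_neg_distrib]
    exact Finset.sum_congr rfl fun i _ => by ring
  have split1 : (∑ i, (R i * (A1 i - su i * w1 - p2 i * A0) + sw i * ∑ m, su m * dR m i))
      = ((∑ i, R i * (A1 i - p2 i * A0)) - (∑ i, R i * su i) * w1)
        + ∑ i, sw i * ∑ m, su m * dR m i := by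
    rw [Finset.sum_add_distrib]
    congr 1
    have e : ∀ i, R i * (A1 i - su i * w1 - p2 i * A0)
        = R i * (A1 i - p2 i * A0) - R i * su i * w1 := fun i => by ring
    simp only [e]
    rw [Finset.sum_sub_distrib, ← Finset.sum_mul]
  have split2 : (∑ i, (R i * (B1 i - sw i * u1 - p2 i * B0) + su i * ∑ m, sw m * dR m i))
      = ((∑ i, R i * (B1 i - p2 i * B0)) - (∑ i, R i * sw i) * u1)
        + ∑ i, su i * ∑ m, sw m * dR m i := by
    rw [Finset.sum_add_distrib]
    congr 1
    have e : ∀ i, R i * (B1 i - sw i * u1 - p2 i * B0)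
        = R i * (B1 i - p2 i * B0) - R i * sw i * u1 := fun i => by ring
    simp only [e]
    rw [Finset.sum_sub_distrib, ← Finset.sum_mul]
  have hR : (∑ i, R i * (u1 * sw i - w1 * su i))
      = u1 * (∑ i, R i * sw i) - w1 * (∑ i, R i * su i) := by
    simp only [mul_sub, Finset.sum_sub_distrib]
    rw [Finset.mul_sum, Finset.mul_sum]
    congr 1 <;> exact Finset.sum_congr rfl fun i _ => by ring
  have hdd : (∑ i, sw i * ∑ m, su m * dR m i) - (∑ i, su i * ∑ m, sw m * dR m i)
      = 3 * ((1/2) * (∑ i, ∑ j, C i j * (su i * sw j - sw i * su j))) := by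
    have l1 : (∑ i, sw i * ∑ m, su m * dR m i) = ∑ i, ∑ j, dR i j * (su i * sw j) := by
      simp only [Finset.mul_sum]
      rw [Finset.sum_comm]
      exact Finset.sum_congr rfl fun i _ => Finset.sum_congr rfl fun j _ => by ring
    have l2 : (∑ i, su i * ∑ m, sw m * dR m i) = ∑ i, ∑ j, dR i j * (sw i * su j) := by
      simp only [Finset.mul_sum]
      rw [Finset.sum_comm]
      exact Finset.sum_congr rfl fun i _ => Finset.sum_congr rfl fun j _ => by ring
    rw [l1, l2, ← Finset.sum_sub_distrib]
    have l3 : ∑ i, ((∑ j, dR i j * (su i * sw j)) - ∑ j, dR i j * (sw i * su j))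
        = ∑ i, ∑ j, dR i j * (su i * sw j - sw i * su j) := by
      refine Finset.sum_congr rfl fun i _ => ?_
      rw [← Finset.sum_sub_distrib]
      exact Finset.sum_congr rfl fun j _ => by ring
    rw [l3, antisym_sum dR su sw]
    have l4 : (∑ i, ∑ j, ((dR i j - dR j i) * (su i * sw j - sw i * su j)))
        = ∑ i, ∑ j, 3 * (C i j * (su i * sw j - sw i * su j)) :=
      Finset.sum_congr rfl fun i _ => Finset.sum_congr rfl fun j _ => by rw [hkey i j]; ring
    rw [l4]
    rw [show (∑ i, ∑ j, 3 * (C i j * (su i * sw j - sw i * su j)))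
        = 3 * ∑ i, ∑ j, C i j * (su i * sw j - sw i * su j) from by
      rw [Finset.mul_sum]; exact Finset.sum_congr rfl fun i _ => by rw [Finset.mul_sum]]
    ring
  rw [split1, split2, hR, hT7]
  linear_combination hdd

lemma lieb_vert_1 {A B : E n → E n} {p : E n} (hA : DifferentiableAt ℝ A p)
    (hB : DifferentiableAt ℝ B p) (hA1 : (fun q => (A q).1) = (fun _ : E n => (0:ℝ)))
    (hB1 : (fun q => (B q).1) = (fun _ : E n => (0:ℝ))) : (lieb A B p).1 = 0 := by
  rw [lieb_1 hA hB, hA1, hB1]; simp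

lemma lieb_vert_x {A B : E n → E n} {p : E n} (hA : DifferentiableAt ℝ A p)
    (hB : DifferentiableAt ℝ B p) (j : Fin n)
    (hA1 : (fun q => (A q).2.1 j) = (fun _ : E n => (0:ℝ)))
    (hB1 : (fun q => (B q).2.1 j) = (fun _ : E n => (0:ℝ))) : (lieb A B p).2.1 j = 0 := by
  rw [lieb_x hA hB j, hA1, hB1]; simp

/-- The Frölicher–Nijenhuis bracket of the vertical endomorphism
`J` and the Jacobi endomorphism `Φ` satisfies `[J,Φ] = 3R + Φ∧dt`: for all smooth
`X, Y`,
`[JX,ΦY] + [ΦX,JY] + (J∘Φ + Φ∘J)([X,Y]) − J([X,ΦY]) − J([ΦX,Y]) − Φ([X,JY]) − Φ([JX,Y])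
  = 3 R(X,Y) + dt(Y)Φ(X) − dt(X)Φ(Y)`. -/
theorem stmt7 (n : ℕ) (hn : 1 ≤ n) (G : E n → Fin n → ℝ) (hG : Cinf G) :
    ∀ X Y : E n → E n, Cinf X → Cinf Y → ∀ p : E n,
      lieb (fun q => Jv q (X q)) (fun q => Phi G q (Y q)) p
      + lieb (fun q => Phi G q (X q)) (fun q => Jv q (Y q)) p
      + Jv p (Phi G p (lieb X Y p)) + Phi G p (Jv p (lieb X Y p))
      - Jv p (lieb X (fun q => Phi G q (Y q)) p)
      - Jv p (lieb (fun q => Phi G q (X q)) Y p)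
      - Phi G p (lieb X (fun q => Jv q (Y q)) p)
      - Phi G p (lieb (fun q => Jv q (X q)) Y p)
      = (3 : ℝ) • Rform G p (X p) (Y p) + (Y p).1 • Phi G p (X p) - (X p).1 • Phi G p (Y p) := by
  intro X Y hX hY p
  have hJXf : Cinf (fun q => Jv q (X q)) := cinf_JX hX
  have hJYf : Cinf (fun q => Jv q (Y q)) := cinf_JX hY
  have hPXf : Cinf (fun q => Phi G q (X q)) := cinf_PhiY hG hX
  have hPYf : Cinf (fun q => Phi G q (Y q)) := cinf_PhiY hG hY
  refine Prod.ext ?_ (Prod.ext ?_ ?_)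
  · have l1a : (lieb (fun q => Jv q (X q)) (fun q => Phi G q (Y q)) p).1 = 0 :=
      lieb_vert_1 hJXf.dAt hPYf.dAt rfl rfl
    have l1b : (lieb (fun q => Phi G q (X q)) (fun q => Jv q (Y q)) p).1 = 0 :=
      lieb_vert_1 hPXf.dAt hJYf.dAt rfl rfl
    simp only [Prod.fst_add, Prod.fst_sub]
    rw [l1a, l1b]
    simp [Jv, Phi, Rform, ypart, Prod.smul_fst, smul_eq_mul]
  · funext j
    have lxa : (lieb (fun q => Jv q (X q)) (fun q => Phi G q (Y q)) p).2.1 j = 0 :=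
      lieb_vert_x hJXf.dAt hPYf.dAt j rfl rfl
    have lxb : (lieb (fun q => Phi G q (X q)) (fun q => Jv q (Y q)) p).2.1 j = 0 :=
      lieb_vert_x hPXf.dAt hJYf.dAt j rfl rfl
    simp only [Prod.snd_add, Prod.snd_sub, Prod.fst_add, Prod.fst_sub, Pi.add_apply,
      Pi.sub_apply]
    rw [lxa, lxb]
    simp [Jv, Phi, Rform, ypart, Prod.smul_snd, Prod.smul_fst, Pi.smul_apply, smul_eq_mul]
  · funext k
    -- component value facts
    have hJXv : ∀ i : Fin n, (Jv p (X p)).2.2 i = (X p).2.1 i - p.2.2 i * (X p).1 :=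
      fun i => rfl
    have hJYv : ∀ i : Fin n, (Jv p (Y p)).2.2 i = (Y p).2.1 i - p.2.2 i * (Y p).1 :=
      fun i => rfl
    have hPYv : (Phi G p (Y p)).2.2 k
        = ∑ i, Rjac G k i p * ((Y p).2.1 i - p.2.2 i * (Y p).1) := rfl
    have hPXv : (Phi G p (X p)).2.2 k
        = ∑ i, Rjac G k i p * ((X p).2.1 i - p.2.2 i * (X p).1) := rfl
    have hfRX : ∀ i : Fin n, fderiv ℝ (Rjac G k i) p (Jv p (X p))
        = ∑ m, ((X p).2.1 m - p.2.2 m * (X p).1) * fderiv ℝ (Rjac G k i) p (pdy m) :=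
      fun i => fderiv_ypart (Rjac G k i) p (fun m => (X p).2.1 m - p.2.2 m * (X p).1)
    have hfRY : ∀ i : Fin n, fderiv ℝ (Rjac G k i) p (Jv p (Y p))
        = ∑ m, ((Y p).2.1 m - p.2.2 m * (Y p).1) * fderiv ℝ (Rjac G k i) p (pdy m) :=
      fun i => fderiv_ypart (Rjac G k i) p (fun m => (Y p).2.1 m - p.2.2 m * (Y p).1)
    -- lieb component facts for T5-T8
    have hzPYx : ∀ j : Fin n, (lieb X (fun q => Phi G q (Y q)) p).2.1 j
        = -(fderiv ℝ X p (Phi G p (Y p))).2.1 j := by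
      intro j
      rw [lieb_x hX.dAt hPYf.dAt j,
        show (fun q => (Phi G q (Y q)).2.1 j) = fun _ : E n => (0:ℝ) from rfl,
        Dx1 j hX.dAt]
      simp
    have hzPY1 : (lieb X (fun q => Phi G q (Y q)) p).1
        = -(fderiv ℝ X p (Phi G p (Y p))).1 := by
      rw [lieb_1 hX.dAt hPYf.dAt,
        show (fun q => (Phi G q (Y q)).1) = fun _ : E n => (0:ℝ) from rfl, D1 hX.dAt]
      simp
    have hzPXx : ∀ j : Fin n, (lieb (fun q => Phi G q (X q)) Y p).2.1 j
        = (fderiv ℝ Y p (Phi G p (X p))).2.1 j := by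
      intro j
      rw [lieb_x hPXf.dAt hY.dAt j,
        show (fun q => (Phi G q (X q)).2.1 j) = fun _ : E n => (0:ℝ) from rfl,
        Dx1 j hY.dAt]
      simp
    have hzPX1 : (lieb (fun q => Phi G q (X q)) Y p).1
        = (fderiv ℝ Y p (Phi G p (X p))).1 := by
      rw [lieb_1 hPXf.dAt hY.dAt,
        show (fun q => (Phi G q (X q)).1) = fun _ : E n => (0:ℝ) from rfl, D1 hY.dAt]
      simp
    have hzJYx : ∀ j : Fin n, (lieb X (fun q => Jv q (Y q)) p).2.1 j
        = -(fderiv ℝ X p (Jv p (Y p))).2.1 j := by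
      intro j
      rw [lieb_x hX.dAt hJYf.dAt j,
        show (fun q => (Jv q (Y q)).2.1 j) = fun _ : E n => (0:ℝ) from rfl,
        Dx1 j hX.dAt]
      simp
    have hzJY1 : (lieb X (fun q => Jv q (Y q)) p).1
        = -(fderiv ℝ X p (Jv p (Y p))).1 := by
      rw [lieb_1 hX.dAt hJYf.dAt,
        show (fun q => (Jv q (Y q)).1) = fun _ : E n => (0:ℝ) from rfl, D1 hX.dAt]
      simp
    have hzJXx : ∀ j : Fin n, (lieb (fun q => Jv q (X q)) Y p).2.1 j
        = (fderiv ℝ Y p (Jv p (X p))).2.1 j := by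
      intro j
      rw [lieb_x hJXf.dAt hY.dAt j,
        show (fun q => (Jv q (X q)).2.1 j) = fun _ : E n => (0:ℝ) from rfl,
        Dx1 j hY.dAt]
      simp
    have hzJX1 : (lieb (fun q => Jv q (X q)) Y p).1
        = (fderiv ℝ Y p (Jv p (X p))).1 := by
      rw [lieb_1 hJXf.dAt hY.dAt,
        show (fun q => (Jv q (X q)).1) = fun _ : E n => (0:ℝ) from rfl, D1 hY.dAt]
      simp
    -- T3, T4
    have h3 : (Jv p (Phi G p (lieb X Y p))).2.2 k = 0 := by
      simp [Jv, Phi, ypart, dxi]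
    have h4 : (Phi G p (Jv p (lieb X Y p))).2.2 k = 0 := by
      simp [Jv, Phi, ypart, dxi]
    -- T5-T8
    have h5 : (Jv p (lieb X (fun q => Phi G q (Y q)) p)).2.2 k
        = -((fderiv ℝ X p (Phi G p (Y p))).2.1 k
            - p.2.2 k * (fderiv ℝ X p (Phi G p (Y p))).1) := by
      rw [show (Jv p (lieb X (fun q => Phi G q (Y q)) p)).2.2 k
          = (lieb X (fun q => Phi G q (Y q)) p).2.1 k
            - p.2.2 k * (lieb X (fun q => Phi G q (Y q)) p).1 from rfl, hzPYx k, hzPY1]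
      ring
    have h6 : (Jv p (lieb (fun q => Phi G q (X q)) Y p)).2.2 k
        = (fderiv ℝ Y p (Phi G p (X p))).2.1 k
          - p.2.2 k * (fderiv ℝ Y p (Phi G p (X p))).1 := by
      rw [show (Jv p (lieb (fun q => Phi G q (X q)) Y p)).2.2 k
          = (lieb (fun q => Phi G q (X q)) Y p).2.1 k
            - p.2.2 k * (lieb (fun q => Phi G q (X q)) Y p).1 from rfl, hzPXx k, hzPX1]
    have h7 : (Phi G p (lieb X (fun q => Jv q (Y q)) p)).2.2 k
        = ∑ i, Rjac G k i p * (-(fderiv ℝ X p (Jv p (Y p))).2.1 i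
            - p.2.2 i * -(fderiv ℝ X p (Jv p (Y p))).1) := by
      rw [show (Phi G p (lieb X (fun q => Jv q (Y q)) p)).2.2 k
          = ∑ i, Rjac G k i p * ((lieb X (fun q => Jv q (Y q)) p).2.1 i
              - p.2.2 i * (lieb X (fun q => Jv q (Y q)) p).1) from rfl]
      exact Finset.sum_congr rfl fun i _ => by rw [hzJYx i, hzJY1]
    have h8 : (Phi G p (lieb (fun q => Jv q (X q)) Y p)).2.2 k
        = ∑ i, Rjac G k i p * ((fderiv ℝ Y p (Jv p (X p))).2.1 i
            - p.2.2 i * (fderiv ℝ Y p (Jv p (X p))).1) := by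
      rw [show (Phi G p (lieb (fun q => Jv q (X q)) Y p)).2.2 k
          = ∑ i, Rjac G k i p * ((lieb (fun q => Jv q (X q)) Y p).2.1 i
              - p.2.2 i * (lieb (fun q => Jv q (X q)) Y p).1) from rfl]
      exact Finset.sum_congr rfl fun i _ => by rw [hzJXx i, hzJX1]
    have hRf : (Rform G p (X p) (Y p)).2.2 k
        = (1/2) * (∑ i, ∑ j, Rcur G k i j p
            * (((X p).2.1 i - p.2.2 i * (X p).1) * ((Y p).2.1 j - p.2.2 j * (Y p).1)
              - ((Y p).2.1 i - p.2.2 i * (Y p).1) * ((X p).2.1 j - p.2.2 j * (X p).1)))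
          + ∑ i, Rjac G k i p * ((X p).1 * ((Y p).2.1 i - p.2.2 i * (Y p).1)
              - (Y p).1 * ((X p).2.1 i - p.2.2 i * (X p).1)) := rfl
    simp only [Prod.snd_add, Prod.snd_sub, Prod.fst_add, Prod.fst_sub, Pi.add_apply,
      Pi.sub_apply, Prod.smul_snd, Pi.smul_apply, smul_eq_mul]
    rw [lieb_y hJXf.dAt hPYf.dAt k, lieb_y hPXf.dAt hJYf.dAt k]
    rw [DPhiY hG hY p (Jv p (X p)) k, DJX hX p (Phi G p (Y p)) k,
      DJX hY p (Phi G p (X p)) k, DPhiY hG hX p (Jv p (Y p)) k]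
    rw [h3, h4, h5, h6, h7, h8, hRf, hPYv, hPXv]
    simp only [hJXv, hJYv, hfRX, hfRY]
    exact final2 (fun i => Rjac G k i p)
      (fun i => (X p).2.1 i - p.2.2 i * (X p).1)
      (fun i => (Y p).2.1 i - p.2.2 i * (Y p).1)
      (fun i => p.2.2 i)
      (fun i => (fderiv ℝ Y p (Jv p (X p))).2.1 i)
      (fun i => (fderiv ℝ X p (Jv p (Y p))).2.1 i)
      (fun m i => fderiv ℝ (Rjac G k i) p (pdy m))
      (fun i j => Rcur G k i j p)
      (X p).1 (Y p).1 (p.2.2 k)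
      (fderiv ℝ Y p (Jv p (X p))).1 (fderiv ℝ X p (Jv p (Y p))).1
      ((fderiv ℝ X p (Phi G p (Y p))).2.1 k) ((fderiv ℝ X p (Phi G p (Y p))).1)
      ((fderiv ℝ Y p (Phi G p (X p))).2.1 k) ((fderiv ℝ Y p (Phi G p (X p))).1)
      (fun i j => key hG p k i j)
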